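/- Let R be a commutative ring, A ∈ R^{m×n}, A° ∈ R^{n×m}, and let a_j denote the coefficient of Z^j in det(I_m + Z·(A·A°)). Then for every k ≥ 1 one has the identity of n×m matrices: a_{k−1}·A° − a_{k−2}·A°·A·A° + ⋯ + (−1)^{k−1}·(A°·A)^{k−1}·A° = Σ_{α,β} det(A°_{β,α}) · Adj_{α,β}(A), where the sum runs over all strictly increasing α : Fin k → Fin m and β : Fin k → Fin n. -/

import Mathlib

open Matrix Polynomial
open scoped Classical

section Lemmas

variable {S : Type*} [CommRing S]


/-- Lemma U -/
lemma det_updateRow_eq_sum {ι : Type*} [DecidableEq ι] [Fintype ι]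
    (M : Matrix ι ι S) (i : ι) (b : ι → S) :
    (M.updateRow i b).det = ∑ j, b j * M.adjugate j i := by
  rw [← Matrix.cramer_transpose_apply, Matrix.cramer_eq_adjugate_mulVec,
    Matrix.mulVec, dotProduct]
  refine Finset.sum_congr rfl fun j _ => ?_
  rw [← Matrix.adjugate_transpose, Matrix.transpose_apply]
  ring

/-- Jε -/
lemma det_add_sq_zero_smul {ι : Type*} [DecidableEq ι] [Fintype ι]
    {η : S} (hη : η * η = 0) (M N : Matrix ι ι S) :
    (M + η • N).det = M.det + η * ∑ i, (M.updateRow i (N i)).det := by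
  set f := (Matrix.detRowAlternating (R := S) (n := ι)).toMultilinearMap with hf
  have hdet : ∀ P : Matrix ι ι S, P.det = f P := fun _ => rfl
  have key : (M + η • N).det
      = ∑ s : Finset ι, η ^ s.card • f (s.piecewise N M) := by
    rw [add_comm M (η • N), hdet]
    refine (f.map_add_univ (η • N : Matrix ι ι S) M).trans ?_
    refine Finset.sum_congr rfl fun s _ => ?_
    have h3 : s.piecewise (η • N : Matrix ι ι S) M
        = s.piecewise (fun i => η • (s.piecewise N M) i) (s.piecewise N M) := by
      ext i j
      by_cases hi : i ∈ s <;> simp [Finset.piecewise, hi]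
    rw [h3, f.map_piecewise_smul (fun _ => η) (s.piecewise N M) s]
    simp [Finset.prod_const, smul_smul]
  rw [key]
  have split : ∀ s : Finset ι, η ^ s.card • f (s.piecewise N M)
      = (if s = ∅ then M.det else 0)
        + (if s.card = 1 then η • f (s.piecewise N M) else 0) := by
    intro s
    rcases Nat.lt_or_ge s.card 2 with h | h
    · interval_cases h' : s.card
      · have hs : s = ∅ := Finset.card_eq_zero.mp h'
        subst hs
        simp [Finset.piecewise_empty, hdet]
        exact congrArg f (Finset.piecewise_empty N M)
      · have hs : s ≠ ∅ := by
          intro hs; rw [hs] at h'; simp at h'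
        simp [h', hs, pow_one]
    · have hz : η ^ s.card = 0 := by
        obtain ⟨c, hc⟩ := Nat.exists_eq_add_of_le h
        rw [hc, pow_add, pow_two, hη, zero_mul]
      have h0 : s ≠ ∅ := by
        intro hs; rw [hs] at h; simp at h
      have h1 : ¬ s.card = 1 := by omega
      simp [hz, h0, h1]
  rw [Finset.sum_congr rfl fun s _ => split s, Finset.sum_add_distrib]
  congr 1
  · simp
  · rw [Finset.sum_ite, Finset.sum_const_zero, add_zero]
    have hbij : ∑ s ∈ Finset.univ.filter (fun s : Finset ι => s.card = 1),
        η • f (s.piecewise N M) = ∑ i : ι, η • f (({i} : Finset ι).piecewise N M) := by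
      refine (Finset.sum_bij (fun (i : ι) _ => ({i} : Finset ι)) ?_ ?_ ?_ ?_).symm
      · intro i _; simp
      · intro a _ b _ h
        exact Finset.singleton_injective h
      · intro s hs
        simp only [Finset.mem_filter, Finset.card_eq_one] at hs
        obtain ⟨a, rfl⟩ := hs.2
        exact ⟨a, Finset.mem_univ a, rfl⟩
      · intro i _; rfl
    rw [hbij, Finset.mul_sum]
    refine Finset.sum_congr rfl fun i _ => ?_
    have hupd : ({i} : Finset ι).piecewise N M = M.updateRow i (N i) := by
      ext a b
      simp only [Finset.piecewise, Finset.mem_singleton]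
      by_cases ha : a = i
      · subst ha; simp
      · simp [Function.update, ha, Matrix.updateRow_ne ha]
    rw [hupd, smul_eq_mul, hdet]



/-- reindexing sums over card-j subsets as sums over strictly monotone maps -/
lemma sum_card_eq_sum_strictMono {m j : ℕ} {T : Type*} [AddCommMonoid T]
    (G : Finset (Fin m) → T) (F : (Fin j → Fin m) → T)
    (hGF : ∀ α : Fin j → Fin m, StrictMono α → G (Finset.image α Finset.univ) = F α) :
    ∑ s ∈ Finset.univ.filter (fun s : Finset (Fin m) => s.card = j), G s
      = ∑ α ∈ Finset.univ.filter (fun α : Fin j → Fin m => StrictMono α), F α := by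
  have huniq : ∀ (α : Fin j → Fin m), StrictMono α →
      ∀ h : (Finset.image α Finset.univ).card = j,
      α = (Finset.image α Finset.univ).orderEmbOfFin h := by
    intro α hα h
    exact Finset.orderEmbOfFin_unique h (fun x => Finset.mem_image_of_mem α (Finset.mem_univ x)) hα
  refine (Finset.sum_bij (fun (α : Fin j → Fin m) _ => Finset.image α Finset.univ)
    ?_ ?_ ?_ ?_).symm
  · intro α hα
    simp only [Finset.mem_filter, Finset.mem_univ, true_and] at hα ⊢
    rw [Finset.card_image_of_injective _ hα.injective, Finset.card_univ, Fintype.card_fin]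
  · intro α hα β hβ h
    simp only [Finset.mem_filter, Finset.mem_univ, true_and] at hα hβ
    have hcα : (Finset.image α Finset.univ).card = j := by
      rw [Finset.card_image_of_injective _ hα.injective, Finset.card_univ, Fintype.card_fin]
    have hcβ : (Finset.image β Finset.univ).card = j := by
      rw [Finset.card_image_of_injective _ hβ.injective, Finset.card_univ, Fintype.card_fin]
    have him : Finset.image α Finset.univ = Finset.image β Finset.univ := h
    rw [huniq α hα hcα, huniq β hβ hcβ]
    refine Finset.orderEmbOfFin_unique hcβ ?_ ((Finset.image α Finset.univ).orderEmbOfFin hcα).strictMono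
    intro x
    rw [← him]
    exact Finset.orderEmbOfFin_mem _ hcα x
  · intro s hs
    simp only [Finset.mem_filter, Finset.mem_univ, true_and] at hs
    refine ⟨s.orderEmbOfFin hs, ?_, ?_⟩
    · simp only [Finset.mem_filter, Finset.mem_univ, true_and]
      exact (s.orderEmbOfFin hs).strictMono
    · apply Finset.coe_injective
      rw [Finset.coe_image, Finset.coe_univ, Set.image_univ]
      exact Finset.range_orderEmbOfFin s hs
  · intro α hα
    simp only [Finset.mem_filter, Finset.mem_univ, true_and] at hα
    exact (hGF α hα).symm

/-- principal minor: matrix that is `P` on rows in `s` and identity elsewhere. -/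
lemma det_piecewise_one {m j : ℕ} (P : Matrix (Fin m) (Fin m) S) (s : Finset (Fin m))
    (h : s.card = j) :
    Matrix.det (Matrix.of fun a b =>
        if a ∈ s then P a b else (1 : Matrix (Fin m) (Fin m) S) a b)
      = (P.submatrix (s.orderEmbOfFin h) (s.orderEmbOfFin h)).det := by
  set Q : Matrix (Fin m) (Fin m) S := Matrix.of fun a b =>
      if a ∈ s then P a b else (1 : Matrix (Fin m) (Fin m) S) a b with hQ
  set e : {x // x ∈ s} ⊕ {x // ¬ x ∈ s} ≃ Fin m := Equiv.sumCompl (· ∈ s) with he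
  have h1 : Q.det = (Q.submatrix e e).det := (Matrix.det_submatrix_equiv_self e Q).symm
  have h2 : Q.submatrix e e
      = Matrix.fromBlocks (P.submatrix Subtype.val Subtype.val)
          (P.submatrix Subtype.val Subtype.val) 0 1 := by
    ext a b
    rcases a with a | a <;> rcases b with b | b <;>
      simp only [Matrix.submatrix_apply, Matrix.fromBlocks_apply₁₁, Matrix.fromBlocks_apply₁₂,
        Matrix.fromBlocks_apply₂₁, Matrix.fromBlocks_apply₂₂, he, Equiv.sumCompl_apply_inl,
        Equiv.sumCompl_apply_inr, hQ, Matrix.of_apply]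
    · simp [a.2]
    · simp [a.2]
    · simp only [a.2, if_false]
      have : (a : Fin m) ≠ (b : Fin m) := by
        intro hab
        exact a.2 (hab ▸ b.2)
      simp [Matrix.one_apply, this]
    · simp only [a.2, if_false]
      rw [Matrix.one_apply, Matrix.one_apply]
      simp [Subtype.ext_iff]
  have h3 : Q.det = (P.submatrix (Subtype.val : {x // x ∈ s} → Fin m) Subtype.val).det := by
    rw [h1, h2, Matrix.det_fromBlocks_zero₂₁, Matrix.det_one, mul_one]
  rw [h3, ← Matrix.det_submatrix_equiv_self (s.orderIsoOfFin h).toEquiv]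
  congr 1

/-- coefficient of det(1 + X•P) as sum of principal minors over strictly monotone maps -/
lemma coeff_det_one_add_X_smul_eq_minors {m : ℕ} (P : Matrix (Fin m) (Fin m) S) (j : ℕ) :
    (((1 : Matrix (Fin m) (Fin m) S[X]) + (X : S[X]) • P.map C).det).coeff j
      = ∑ α ∈ Finset.univ.filter (fun α : Fin j → Fin m => StrictMono α),
          (P.submatrix α α).det := by
  set f := (Matrix.detRowAlternating (R := S[X]) (n := Fin m)).toMultilinearMap with hf
  have hdet : ∀ W : Matrix (Fin m) (Fin m) S[X], W.det = f W := fun _ => rfl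
  have key : ((1 : Matrix (Fin m) (Fin m) S[X]) + (X : S[X]) • P.map C).det
      = ∑ s : Finset (Fin m), (X : S[X]) ^ s.card *
          C (Matrix.det (Matrix.of fun a b =>
            if a ∈ s then P a b else (1 : Matrix (Fin m) (Fin m) S) a b)) := by
    rw [add_comm, hdet]
    refine (f.map_add_univ ((X : S[X]) • P.map C) (1 : Matrix (Fin m) (Fin m) S[X])).trans ?_
    refine Finset.sum_congr rfl fun s _ => ?_
    have h3 : s.piecewise ((X : S[X]) • P.map C) (1 : Matrix (Fin m) (Fin m) S[X])
        = s.piecewise (fun i => (X : S[X]) •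
            (s.piecewise (P.map C) (1 : Matrix (Fin m) (Fin m) S[X])) i)
            (s.piecewise (P.map C) (1 : Matrix (Fin m) (Fin m) S[X])) := by
      ext i j
      by_cases hi : i ∈ s <;> simp [Finset.piecewise, hi]
    rw [h3, f.map_piecewise_smul (fun _ => (X : S[X]))
      (s.piecewise (P.map C) (1 : Matrix (Fin m) (Fin m) S[X])) s]
    rw [Finset.prod_const, smul_eq_mul]
    congr 1
    have h4 : s.piecewise (P.map C) (1 : Matrix (Fin m) (Fin m) S[X])
        = (Matrix.of fun a b =>
            if a ∈ s then P a b else (1 : Matrix (Fin m) (Fin m) S) a b).map C := by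
      ext a b
      by_cases ha : a ∈ s
      · simp [Finset.piecewise, ha]
      · simp only [Finset.piecewise, ha, if_false, Matrix.map_apply, Matrix.of_apply]
        rw [Matrix.one_apply, Matrix.one_apply]
        split <;> simp
    refine (hdet _).symm.trans ?_
    rw [h4]
    exact ((RingHom.map_det (C : S →+* S[X]) _)).symm
  rw [key, finset_sum_coeff]
  have term : ∀ s : Finset (Fin m),
      ((X : S[X]) ^ s.card * C (Matrix.det (Matrix.of fun a b =>
        if a ∈ s then P a b else (1 : Matrix (Fin m) (Fin m) S) a b))).coeff j
      = if s.card = j then (Matrix.det (Matrix.of fun a b =>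
          if a ∈ s then P a b else (1 : Matrix (Fin m) (Fin m) S) a b)) else 0 := by
    intro s
    rw [mul_comm, Polynomial.C_mul_X_pow_eq_monomial, Polynomial.coeff_monomial]
  rw [Finset.sum_congr rfl fun s _ => term s, ← Finset.sum_filter]
  refine sum_card_eq_sum_strictMono _ _ ?_
  intro α hα
  have hc : (Finset.image α Finset.univ).card = j := by
    rw [Finset.card_image_of_injective _ hα.injective, Finset.card_univ, Fintype.card_fin]
  rw [det_piecewise_one P _ hc]
  congr 1
  rw [← Finset.orderEmbOfFin_unique hc
    (fun x => Finset.mem_image_of_mem α (Finset.mem_univ x)) hα]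


section CauchyBinet
open Equiv Finset

local notation "ε" σ:arg => ((Equiv.Perm.sign σ : ℤ) : S)



lemma det_mul_aux' {ι κ : Type*} [DecidableEq ι] [Fintype ι] [DecidableEq κ]
    (M : Matrix ι κ S) (N : Matrix κ ι S) {p : ι → κ} (H : ¬Function.Injective p) :
    (∑ σ : Perm ι, ε σ * ∏ x, M (σ x) (p x) * N (p x) x) = 0 := by
  obtain ⟨i, j, hpij, hij⟩ : ∃ i j, p i = p j ∧ i ≠ j := by
    rw [Function.Injective] at H
    push_neg at H
    exact H
  exact Finset.sum_involution (fun σ _ => σ * Equiv.swap i j)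
      (fun σ _ => by
        have : (∏ x, M (σ x) (p x)) = ∏ x, M ((σ * Equiv.swap i j) x) (p x) :=
          Fintype.prod_equiv (Equiv.swap i j) _ _ (by simp [Equiv.apply_swap_eq_self hpij])
        simp [this, Equiv.Perm.sign_swap hij, -Equiv.Perm.sign_swap', Finset.prod_mul_distrib])
      (fun σ _ _ => (not_congr Equiv.mul_swap_eq_iff).mpr hij) (fun _ _ => Finset.mem_univ _)
      fun σ _ => Equiv.mul_swap_involutive i j σ

lemma det_mul_eq_perm_sum {ι : Type*} [DecidableEq ι] [Fintype ι] (M N : Matrix ι ι S) :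
    det M * det N = ∑ τ : Perm ι, ∑ σ : Perm ι, ε σ * ∏ i, M (σ i) (τ i) * N (τ i) i := by
  rw [← det_mul]
  calc
    det (M * N) = ∑ p : ι → ι, ∑ σ : Perm ι, ε σ * ∏ i, M (σ i) (p i) * N (p i) i := by
      simp only [det_apply', mul_apply, Finset.prod_univ_sum, Finset.mul_sum,
        Fintype.piFinset_univ]
      rw [Finset.sum_comm]
    _ = ∑ p ∈ Finset.univ.filter (fun p : ι → ι => Function.Bijective p),
          ∑ σ : Perm ι, ε σ * ∏ i, M (σ i) (p i) * N (p i) i := by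
      refine (Finset.sum_subset (Finset.filter_subset _ _) fun f _ hbij ↦ ?_).symm
      apply det_mul_aux' M N
      intro hinj
      simp only [Finset.mem_filter, Finset.mem_univ, true_and] at hbij
      exact hbij (Finite.injective_iff_bijective.mp hinj)
    _ = ∑ τ : Perm ι, ∑ σ : Perm ι, ε σ * ∏ i, M (σ i) (τ i) * N (τ i) i :=
      Finset.sum_bij (fun p h ↦ Equiv.ofBijective p (Finset.mem_filter.1 h).2)
        (fun _ _ ↦ Finset.mem_univ _)
        (fun _ _ _ _ h ↦ by injection h)
        (fun b _ ↦ ⟨b, Finset.mem_filter.2 ⟨Finset.mem_univ _, b.bijective⟩,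
          Equiv.coe_fn_injective rfl⟩) fun _ _ ↦ rfl

lemma sum_injective_eq_sum_strictMono_perm {j n : ℕ} {T : Type*} [AddCommMonoid T]
    (G : (Fin j → Fin n) → T) :
    ∑ p ∈ Finset.univ.filter (fun p : Fin j → Fin n => Function.Injective p), G p
      = ∑ β ∈ Finset.univ.filter (fun β : Fin j → Fin n => StrictMono β),
          ∑ τ : Equiv.Perm (Fin j), G (β ∘ τ) := by
  rw [← Finset.sum_product']
  refine (Finset.sum_bij (fun bt _ => bt.1 ∘ bt.2) ?_ ?_ ?_ ?_).symm
  · rintro ⟨β, τ⟩ hb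
    simp only [Finset.mem_product, Finset.mem_filter, Finset.mem_univ, true_and] at hb ⊢
    exact hb.1.injective.comp τ.injective
  · rintro ⟨β, τ⟩ hb ⟨β', τ'⟩ hb' h
    replace h : β ∘ ⇑τ = β' ∘ ⇑τ' := h
    simp only [Finset.mem_product, Finset.mem_filter, Finset.mem_univ, true_and] at hb hb'
    have himτ : ∀ (γ : Fin j → Fin n) (ρ : Perm (Fin j)),
        Finset.image (γ ∘ ρ) Finset.univ = Finset.image γ Finset.univ := by
      intro γ ρ
      rw [← Finset.image_image, Finset.image_univ_equiv]
    have him : Finset.image β Finset.univ = Finset.image β' Finset.univ := by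
      rw [← himτ β τ, ← himτ β' τ', h]
    have hcβ : (Finset.image β Finset.univ).card = j := by
      rw [Finset.card_image_of_injective _ hb.1.injective, Finset.card_univ, Fintype.card_fin]
    have hcβ' : (Finset.image β' Finset.univ).card = j := by
      rw [Finset.card_image_of_injective _ hb'.1.injective, Finset.card_univ, Fintype.card_fin]
    have e1 : β = ⇑((Finset.image β Finset.univ).orderEmbOfFin hcβ) :=
      Finset.orderEmbOfFin_unique hcβ
        (fun x => Finset.mem_image_of_mem β (Finset.mem_univ x)) hb.1
    have e2 : β' = ⇑((Finset.image β' Finset.univ).orderEmbOfFin hcβ') :=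
      Finset.orderEmbOfFin_unique hcβ'
        (fun x => Finset.mem_image_of_mem β' (Finset.mem_univ x)) hb'.1
    have e3 : ⇑((Finset.image β Finset.univ).orderEmbOfFin hcβ)
        = ⇑((Finset.image β' Finset.univ).orderEmbOfFin hcβ') := by
      refine Finset.orderEmbOfFin_unique hcβ' ?_
        ((Finset.image β Finset.univ).orderEmbOfFin hcβ).strictMono
      intro x
      rw [← him]
      exact Finset.orderEmbOfFin_mem _ hcβ x
    have hββ' : β = β' := by rw [e1, e3, ← e2]
    subst hββ'
    have hττ' : τ = τ' := by
      apply Equiv.ext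
      intro x
      exact hb.1.injective (congrFun h x)
    rw [hττ']
  · intro p hp
    simp only [Finset.mem_filter, Finset.mem_univ, true_and] at hp
    have hcard : (Finset.image p Finset.univ).card = j := by
      rw [Finset.card_image_of_injective _ hp, Finset.card_univ, Fintype.card_fin]
    set s := Finset.image p Finset.univ with hs
    have hmem : ∀ i, p i ∈ s := fun i => Finset.mem_image_of_mem p (Finset.mem_univ i)
    set t : Fin j → Fin j := fun i => (s.orderIsoOfFin hcard).symm ⟨p i, hmem i⟩ with ht
    have htinj : Function.Injective t := by
      intro a b hab
      rw [ht] at hab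
      have h2 := congrArg (s.orderIsoOfFin hcard) hab
      simp only [OrderIso.apply_symm_apply, Subtype.mk.injEq] at h2
      exact hp h2
    refine ⟨⟨s.orderEmbOfFin hcard, Equiv.ofBijective t (Finite.injective_iff_bijective.mp htinj)⟩,
      ?_, ?_⟩
    · simp only [Finset.mem_product, Finset.mem_filter, Finset.mem_univ, true_and]
      exact ⟨(s.orderEmbOfFin hcard).strictMono, trivial⟩
    · funext i
      simp only [Function.comp_apply, Equiv.ofBijective_apply, ht]
      rw [← Finset.coe_orderIsoOfFin_apply, OrderIso.apply_symm_apply]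
  · rintro ⟨β, τ⟩ _
    rfl

/-- Cauchy-Binet -/
lemma det_mul_rect {j n : ℕ} (M : Matrix (Fin j) (Fin n) S) (N : Matrix (Fin n) (Fin j) S) :
    det (M * N) = ∑ β ∈ Finset.univ.filter (fun β : Fin j → Fin n => StrictMono β),
        det (M.submatrix id β) * det (N.submatrix β id) := by
  calc
    det (M * N) = ∑ p : Fin j → Fin n, ∑ σ : Perm (Fin j),
        ε σ * ∏ i, M (σ i) (p i) * N (p i) i := by
      simp only [det_apply', mul_apply, Finset.prod_univ_sum, Finset.mul_sum,
        Fintype.piFinset_univ]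
      rw [Finset.sum_comm]
    _ = ∑ p ∈ Finset.univ.filter (fun p : Fin j → Fin n => Function.Injective p),
          ∑ σ : Perm (Fin j), ε σ * ∏ i, M (σ i) (p i) * N (p i) i := by
      refine (Finset.sum_subset (Finset.filter_subset _ _) fun f _ hinj ↦ ?_).symm
      apply det_mul_aux' M N
      simpa using hinj
    _ = ∑ β ∈ Finset.univ.filter (fun β : Fin j → Fin n => StrictMono β),
          ∑ τ : Perm (Fin j), ∑ σ : Perm (Fin j),
            ε σ * ∏ i, M (σ i) (β (τ i)) * N (β (τ i)) i :=
      sum_injective_eq_sum_strictMono_perm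
        (fun p => ∑ σ : Perm (Fin j), ε σ * ∏ i, M (σ i) (p i) * N (p i) i)
    _ = ∑ β ∈ Finset.univ.filter (fun β : Fin j → Fin n => StrictMono β),
          det (M.submatrix id β) * det (N.submatrix β id) := by
      refine Finset.sum_congr rfl fun β _ => ?_
      rw [det_mul_eq_perm_sum]
      rfl


end CauchyBinet

lemma cauchy_binet_coeff {m n : ℕ} (M : Matrix (Fin m) (Fin n) S)
    (N : Matrix (Fin n) (Fin m) S) (j : ℕ) :
    (((1 : Matrix (Fin m) (Fin m) S[X]) + (X : S[X]) • (M * N).map C).det).coeff j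
      = ∑ α ∈ Finset.univ.filter (fun α : Fin j → Fin m => StrictMono α),
          ∑ β ∈ Finset.univ.filter (fun β : Fin j → Fin n => StrictMono β),
            (M.submatrix α β).det * (N.submatrix β α).det := by
  rw [coeff_det_one_add_X_smul_eq_minors]
  refine Finset.sum_congr rfl fun α _ => ?_
  have h1 : (M * N).submatrix α α = (M.submatrix α id) * (N.submatrix id α) := by
    ext a b
    simp [Matrix.mul_apply]
  rw [h1, det_mul_rect]
  refine Finset.sum_congr rfl fun β _ => ?_
  rw [Matrix.submatrix_submatrix, Matrix.submatrix_submatrix]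
  simp

lemma pow_mul_comm_rect {m n : ℕ} (M : Matrix (Fin m) (Fin n) S)
    (N : Matrix (Fin n) (Fin m) S) (t : ℕ) :
    (N * M) ^ t * N = N * (M * N) ^ t := by
  induction t with
  | zero => simp
  | succ t ih =>
    rw [pow_succ, pow_succ, Matrix.mul_assoc, ← Matrix.mul_assoc N,
      ← ih, Matrix.mul_assoc, Matrix.mul_assoc]

lemma adjugate_one_add_X_smul_coeff {m : ℕ} (B : Matrix (Fin m) (Fin m) S) (i : ℕ)
    (r p : Fin m) :
    (((1 : Matrix (Fin m) (Fin m) S[X]) + (X : S[X]) • B.map C).adjugate r p).coeff i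
      = (∑ t ∈ Finset.range (i + 1),
          ((-1 : S) ^ t *
            ((((1 : Matrix (Fin m) (Fin m) S[X]) + (X : S[X]) • B.map C).det).coeff (i - t)))
            • B ^ t) r p := by
  set M₀ : Matrix (Fin m) (Fin m) S[X] := 1 + (X : S[X]) • B.map C with hM₀
  have hmap0 : M₀.map (Polynomial.evalRingHom (0 : S)) = 1 := by
    ext a b
    simp only [hM₀, Matrix.map_apply, Matrix.add_apply, Matrix.smul_apply, Matrix.map_apply,
      smul_eq_mul, map_add, _root_.map_mul, coe_evalRingHom, eval_X, zero_mul, add_zero]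
    rw [Matrix.one_apply, Matrix.one_apply]
    split <;> simp
  have hd0 : (M₀.det).coeff 0 = 1 := by
    rw [Polynomial.coeff_zero_eq_eval_zero, ← Polynomial.coe_evalRingHom, RingHom.map_det,
      RingHom.mapMatrix_apply, hmap0, Matrix.det_one]
  have hentry : ∀ a b : Fin m, M₀ a b
      = C ((1 : Matrix (Fin m) (Fin m) S) a b) + X * C (B a b) := by
    intro a b
    simp only [hM₀, Matrix.add_apply, Matrix.smul_apply, Matrix.map_apply, smul_eq_mul]
    congr 1
    rw [Matrix.one_apply, Matrix.one_apply]
    split <;> simp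
  induction i generalizing r p with
  | zero =>
    have h1 : (M₀.adjugate r p).coeff 0 = (1 : Matrix (Fin m) (Fin m) S) r p := by
      rw [Polynomial.coeff_zero_eq_eval_zero, ← Polynomial.coe_evalRingHom]
      have h2 : (Polynomial.evalRingHom (0 : S)) (M₀.adjugate r p)
          = ((M₀.adjugate).map (Polynomial.evalRingHom (0 : S))) r p := rfl
      rw [h2, ← RingHom.mapMatrix_apply, RingHom.map_adjugate, RingHom.mapMatrix_apply,
        hmap0, Matrix.adjugate_one]
    rw [h1, Finset.sum_range_one]
    simp [hd0]
  | succ i ih =>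
    have hmuladj := Matrix.mul_adjugate M₀
    have hrp : ((M₀ * M₀.adjugate) r p).coeff (i + 1)
        = ((M₀.det • (1 : Matrix (Fin m) (Fin m) S[X])) r p).coeff (i + 1) :=
      congrArg (fun W : Matrix (Fin m) (Fin m) S[X] => (W r p).coeff (i + 1)) hmuladj
    have hL : ((M₀ * M₀.adjugate) r p).coeff (i + 1)
        = (M₀.adjugate r p).coeff (i + 1) + ∑ u, B r u * (M₀.adjugate u p).coeff i := by
      rw [Matrix.mul_apply, Polynomial.finset_sum_coeff]
      have hterm : ∀ u, ((M₀ r u) * (M₀.adjugate u p)).coeff (i + 1)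
          = (1 : Matrix (Fin m) (Fin m) S) r u * (M₀.adjugate u p).coeff (i + 1)
            + B r u * (M₀.adjugate u p).coeff i := by
        intro u
        rw [hentry, add_mul, Polynomial.coeff_add, Polynomial.coeff_C_mul, mul_assoc,
          Polynomial.coeff_X_mul, Polynomial.coeff_C_mul]
      rw [Finset.sum_congr rfl fun u _ => hterm u, Finset.sum_add_distrib]
      congr 1
      simp [Matrix.one_apply, ite_mul, Finset.sum_ite_eq]
    have hR : ((M₀.det • (1 : Matrix (Fin m) (Fin m) S[X])) r p).coeff (i + 1)
        = (M₀.det).coeff (i + 1) * (1 : Matrix (Fin m) (Fin m) S) r p := by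
      simp only [Matrix.smul_apply, smul_eq_mul]
      have h1 : (1 : Matrix (Fin m) (Fin m) S[X]) r p
          = C ((1 : Matrix (Fin m) (Fin m) S) r p) := by
        rw [Matrix.one_apply, Matrix.one_apply]
        split <;> simp
      rw [h1, mul_comm, Polynomial.coeff_C_mul, mul_comm]
    rw [hL, hR] at hrp
    have hsum : ∑ u, B r u * (M₀.adjugate u p).coeff i
        = (B * ∑ t ∈ Finset.range (i + 1),
            ((-1 : S) ^ t * ((M₀.det).coeff (i - t))) • B ^ t) r p := by
      rw [Matrix.mul_apply]
      exact Finset.sum_congr rfl fun u _ => by rw [ih]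
    have key : ∑ t ∈ Finset.range (i + 2), ((-1 : S) ^ t * ((M₀.det).coeff (i + 1 - t))) • B ^ t
        = (M₀.det).coeff (i + 1) • (1 : Matrix (Fin m) (Fin m) S)
          - B * ∑ t ∈ Finset.range (i + 1), ((-1 : S) ^ t * ((M₀.det).coeff (i - t))) • B ^ t := by
      rw [Finset.sum_range_succ']
      have h0 : ((-1 : S) ^ 0 * ((M₀.det).coeff (i + 1 - 0))) • B ^ 0
          = (M₀.det).coeff (i + 1) • (1 : Matrix (Fin m) (Fin m) S) := by simp
      have hterm2 : ∀ t, ((-1 : S) ^ (t + 1) * ((M₀.det).coeff (i + 1 - (t + 1)))) • B ^ (t + 1)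
          = -(B * (((-1 : S) ^ t * ((M₀.det).coeff (i - t))) • B ^ t)) := by
        intro t
        have hnat : i + 1 - (t + 1) = i - t := by omega
        rw [hnat, pow_succ (-1 : S), pow_succ' B, mul_smul_comm, ← neg_smul]
        congr 1
        ring
      rw [Finset.sum_congr rfl fun t _ => hterm2 t, h0, Finset.sum_neg_distrib,
        ← Finset.mul_sum]
      abel
    rw [key, Matrix.sub_apply, Matrix.smul_apply, smul_eq_mul, ← hsum]
    linear_combination hrp


end Lemmas

/-- `aCoeff A A' j` is the coefficient of `Z^j` in `det(I_m + Z·(A·A'))`. -/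
noncomputable def aCoeff {R : Type*} [CommRing R] {m n : ℕ}
    (A : Matrix (Fin m) (Fin n) R) (A' : Matrix (Fin n) (Fin m) R) (j : ℕ) : R :=
  (((1 : Matrix (Fin m) (Fin m) R[X]) + (X : R[X]) • (A * A').map C).det).coeff j

/-- `Adj_{α,β}(A) = (I_n)_{·,β} · adjugate(A_{α,β}) · (I_m)_{α,·}`. -/
noncomputable def adjSub {R : Type*} [CommRing R] {m n k : ℕ}
    (A : Matrix (Fin m) (Fin n) R) (α : Fin k → Fin m) (β : Fin k → Fin n) :
    Matrix (Fin n) (Fin m) R :=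
  (1 : Matrix (Fin n) (Fin n) R).submatrix id β * (A.submatrix α β).adjugate *
    (1 : Matrix (Fin m) (Fin m) R).submatrix α id

set_option maxHeartbeats 1000000 in
theorem stmt12 {R : Type*} [CommRing R] {m n : ℕ} (k : ℕ) (hk : 1 ≤ k)
    (A : Matrix (Fin m) (Fin n) R) (A' : Matrix (Fin n) (Fin m) R) :
    (∑ i ∈ Finset.range k,
        ((-1 : R) ^ i * aCoeff A A' (k - 1 - i)) • ((A' * A) ^ i * A')) =
      ∑ α ∈ Finset.univ.filter (fun α : Fin k → Fin m => StrictMono α),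
        ∑ β ∈ Finset.univ.filter (fun β : Fin k → Fin n => StrictMono β),
          (A'.submatrix β α).det • adjSub A α β := by
  ext q p
  -- notation
  set B : Matrix (Fin m) (Fin m) R := A * A' with hB
  set E : Matrix (Fin m) (Fin n) R := Matrix.single p q (1 : R) with hE
  set M₀ : Matrix (Fin m) (Fin m) R[X] := 1 + (X : R[X]) • B.map C with hM₀
  set tpoly : R[X] := ∑ u : Fin m, C (A' q u) * M₀.adjugate u p with htpoly
  have hk1 : k - 1 + 1 = k := Nat.succ_pred_eq_of_pos hk
  have haC : ∀ j, aCoeff A A' j = (M₀.det).coeff j := fun j => rfl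
  -- Step I : LHS entry equals tpoly.coeff (k-1)
  have hL : (∑ i ∈ Finset.range k,
      ((-1 : R) ^ i * aCoeff A A' (k - 1 - i)) • ((A' * A) ^ i * A')) q p
      = tpoly.coeff (k - 1) := by
    have step1 : (∑ i ∈ Finset.range k,
        ((-1 : R) ^ i * aCoeff A A' (k - 1 - i)) • ((A' * A) ^ i * A')) q p
        = ∑ i ∈ Finset.range k, ∑ u : Fin m,
            A' q u * (((-1 : R) ^ i * (M₀.det).coeff (k - 1 - i)) * (B ^ i) u p) := by
      rw [Matrix.sum_apply]
      refine Finset.sum_congr rfl fun i _ => ?_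
      rw [pow_mul_comm_rect, Matrix.smul_apply, smul_eq_mul, haC, Matrix.mul_apply,
        Finset.mul_sum]
      refine Finset.sum_congr rfl fun u _ => ?_
      ring
    rw [step1, Finset.sum_comm]
    rw [htpoly, Polynomial.finset_sum_coeff]
    refine Finset.sum_congr rfl fun u _ => ?_
    rw [Polynomial.coeff_C_mul, ← Finset.mul_sum]
    congr 1
    have h2 : (∑ i ∈ Finset.range k,
        ((-1 : R) ^ i * (M₀.det).coeff (k - 1 - i)) * (B ^ i) u p)
        = (∑ i ∈ Finset.range (k - 1 + 1),
            ((-1 : R) ^ i * (M₀.det).coeff (k - 1 - i)) • B ^ i) u p := by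
      rw [hk1, Matrix.sum_apply]
      refine Finset.sum_congr rfl fun i _ => ?_
      rw [Matrix.smul_apply, smul_eq_mul]
    rw [h2, ← adjugate_one_add_X_smul_coeff B (k - 1) u p]
  rw [hL]
  -- dual numbers setup
  set ι' : R →+* DualNumber R := TrivSqZeroExt.inlHom R R with hι'
  set Atil : Matrix (Fin m) (Fin n) (DualNumber R) :=
    A.map ι' + (DualNumber.eps : DualNumber R) • E.map ι' with hAtil
  set W : DualNumber R :=
    ((1 + (X : (DualNumber R)[X]) • ((Atil * A'.map ι').map C)).det).coeff k with hW
  set ψ : R[X] →+* (DualNumber R)[X] := Polynomial.mapRingHom ι' with hψ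
  set Q₀ : Matrix (Fin m) (Fin m) R[X] := (X : R[X]) • (E * A').map C with hQ₀
  have hη : (C (DualNumber.eps : DualNumber R)) * C DualNumber.eps = 0 := by
    rw [← _root_.map_mul, DualNumber.eps_mul_eps, map_zero]
  -- the split of the perturbed matrix
  have h1 : Atil * A'.map ι'
      = B.map ι' + (DualNumber.eps : DualNumber R) • ((E * A').map ι') := by
    rw [hAtil, Matrix.add_mul, Matrix.smul_mul, ← Matrix.map_mul, ← Matrix.map_mul, hB]
  have hsplit : (1 : Matrix (Fin m) (Fin m) (DualNumber R)[X])
        + (X : (DualNumber R)[X]) • ((Atil * A'.map ι').map C)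
      = M₀.map ψ + (C (DualNumber.eps : DualNumber R)) • Q₀.map ψ := by
    rw [h1]
    ext a b : 2
    simp only [Matrix.add_apply, Matrix.smul_apply, Matrix.map_apply, Matrix.mul_apply,
      smul_eq_mul, map_add, _root_.map_mul, hM₀, hQ₀, hψ, Polynomial.coe_mapRingHom,
      Polynomial.map_add, Polynomial.map_mul, Polynomial.map_X, Polynomial.map_C,
      Polynomial.map_one]
    have hone : (Polynomial.map ι' ((1 : Matrix (Fin m) (Fin m) R[X]) a b))
        = (1 : Matrix (Fin m) (Fin m) (DualNumber R)[X]) a b := by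
      rw [Matrix.one_apply, Matrix.one_apply]
      split <;> simp
    rw [hone]
    ring_nf
  -- determinant of perturbed matrix
  set y₀ : R[X] := ∑ i, (M₀.updateRow i (Q₀ i)).det with hy₀
  have hdetW : ((1 : Matrix (Fin m) (Fin m) (DualNumber R)[X])
        + (X : (DualNumber R)[X]) • ((Atil * A'.map ι').map C)).det
      = ψ M₀.det + (C (DualNumber.eps : DualNumber R)) * ψ y₀ := by
    have hdetmap : ∀ (P : Matrix (Fin m) (Fin m) R[X]), (P.map ψ).det = ψ P.det := by
      intro P
      exact (RingHom.map_det (S := (DualNumber R)[X]) ψ P).symm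
    rw [hsplit, det_add_sq_zero_smul hη]
    congr 1
    · exact hdetmap M₀
    · congr 1
      rw [hy₀, map_sum]
      refine Finset.sum_congr rfl fun i _ => ?_
      have hrow : (M₀.map ψ).updateRow i (Q₀.map ψ i)
          = (M₀.updateRow i (Q₀ i)).map ψ := by
        rw [Matrix.map_updateRow]
        rfl
      rw [hrow, hdetmap]
  -- compute y₀
  have hEA : ∀ (i : Fin m) (u : Fin m), (E * A') i u = if i = p then A' q u else 0 := by
    intro i u
    rw [Matrix.mul_apply, hE]
    by_cases hip : i = p
    · subst hip
      rw [Finset.sum_eq_single q]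
      · simp [Matrix.single]
      · intro v _ hv
        simp [Matrix.single, Ne.symm hv]
      · simp
    · rw [if_neg hip]
      refine Finset.sum_eq_zero fun v _ => ?_
      simp [Matrix.single, Ne.symm hip]
  have hy : y₀ = X * tpoly := by
    rw [hy₀, htpoly, Finset.mul_sum]
    have step : ∀ i : Fin m, (M₀.updateRow i (Q₀ i)).det
        = if i = p then ∑ u, X * (C (A' q u) * M₀.adjugate u p) else 0 := by
      intro i
      rw [det_updateRow_eq_sum]
      by_cases hip : i = p
      · rw [if_pos hip]
        refine Finset.sum_congr rfl fun u _ => ?_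
        have hq : Q₀ i u = X * C (A' q u) := by
          rw [hQ₀, Matrix.smul_apply, Matrix.map_apply, hEA i u, if_pos hip, smul_eq_mul]
        rw [hq, hip]
        ring
      · rw [if_neg hip]
        refine Finset.sum_eq_zero fun u _ => ?_
        have : Q₀ i u = 0 := by
          rw [hQ₀, Matrix.smul_apply, Matrix.map_apply, hEA i u, if_neg hip, map_zero,
            smul_eq_mul, mul_zero]
        rw [this, zero_mul]
    rw [Finset.sum_congr rfl fun i _ => step i, Finset.sum_ite_eq' Finset.univ p]
    simp
  -- snd of W, derivative side
  have hW1 : TrivSqZeroExt.snd W = tpoly.coeff (k - 1) := by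
    rw [hW, hdetW, Polynomial.coeff_add, hψ, Polynomial.coe_mapRingHom, Polynomial.coeff_map,
      Polynomial.coeff_C_mul, Polynomial.coeff_map, hy]
    have hcoeff : (X * tpoly).coeff k = tpoly.coeff (k - 1) := by
      conv_lhs => rw [← hk1]
      rw [Polynomial.coeff_X_mul]
    rw [hcoeff]
    simp [TrivSqZeroExt.snd_mul, hι']
  -- Cauchy-Binet side
  have hCB : W = ∑ α ∈ Finset.univ.filter (fun α : Fin k → Fin m => StrictMono α),
      ∑ β ∈ Finset.univ.filter (fun β : Fin k → Fin n => StrictMono β),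
        (Atil.submatrix α β).det * ((A'.map ι').submatrix β α).det := by
    rw [hW]
    exact cauchy_binet_coeff Atil (A'.map ι') k
  have hW2 : TrivSqZeroExt.snd W
      = ∑ α ∈ Finset.univ.filter (fun α : Fin k → Fin m => StrictMono α),
          ∑ β ∈ Finset.univ.filter (fun β : Fin k → Fin n => StrictMono β),
            (A'.submatrix β α).det * ((adjSub A α β) q p) := by
    rw [hCB, TrivSqZeroExt.snd_sum]
    refine Finset.sum_congr rfl fun α _ => ?_
    rw [TrivSqZeroExt.snd_sum]
    refine Finset.sum_congr rfl fun β _ => ?_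
    have hsub2 : (A'.map ι').submatrix β α = (A'.submatrix β α).map ι' := rfl
    have hsub1 : Atil.submatrix α β
        = (A.submatrix α β).map ι'
          + (DualNumber.eps : DualNumber R) • (E.submatrix α β).map ι' := by
      rfl
    set y₁ : R := ∑ i, ((A.submatrix α β).updateRow i (fun b' => E (α i) (β b'))).det with hy₁
    have hdet3 : (Atil.submatrix α β).det
        = ι' ((A.submatrix α β).det) + DualNumber.eps * ι' y₁ := by
      rw [hsub1, det_add_sq_zero_smul DualNumber.eps_mul_eps]
      congr 1
      · exact (RingHom.map_det ι' _).symm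
      · congr 1
        rw [hy₁, map_sum]
        refine Finset.sum_congr rfl fun i _ => ?_
        have hrow : ((A.submatrix α β).map ι').updateRow i ((E.submatrix α β).map ι' i)
            = ((A.submatrix α β).updateRow i (fun b' => E (α i) (β b'))).map ι' := by
          rw [Matrix.map_updateRow]
          rfl
        rw [hrow]
        exact (RingHom.map_det ι' _).symm
    have hdet4 : ((A'.submatrix β α).map ι').det = ι' ((A'.submatrix β α).det) :=
      (RingHom.map_det ι' _).symm
    rw [hdet3, hsub2, hdet4]
    have hsnd : TrivSqZeroExt.snd
        ((ι' ((A.submatrix α β).det) + DualNumber.eps * ι' y₁) * ι' ((A'.submatrix β α).det))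
        = y₁ * (A'.submatrix β α).det := by
      simp [TrivSqZeroExt.snd_mul, hι', op_smul_eq_mul]
    rw [hsnd]
    have hy₁eq : y₁ = ∑ a, ∑ b, E (α a) (β b) * (A.submatrix α β).adjugate b a := by
      rw [hy₁]
      exact Finset.sum_congr rfl fun i _ => det_updateRow_eq_sum _ i _
    have hadj : (adjSub A α β) q p
        = ∑ a, ∑ b, E (α a) (β b) * (A.submatrix α β).adjugate b a := by
      show ((1 : Matrix (Fin n) (Fin n) R).submatrix id β * (A.submatrix α β).adjugate *
          (1 : Matrix (Fin m) (Fin m) R).submatrix α id) q p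
        = ∑ a, ∑ b, E (α a) (β b) * (A.submatrix α β).adjugate b a
      rw [Matrix.mul_apply]
      refine Finset.sum_congr rfl fun a _ => ?_
      rw [Matrix.mul_apply, Finset.sum_mul]
      refine Finset.sum_congr rfl fun b _ => ?_
      simp only [Matrix.submatrix_apply, id_eq]
      rw [hE]
      by_cases h1 : α a = p
      · by_cases h2 : q = β b
        · simp [Matrix.single, Matrix.one_apply, h1, ← h2]
        · simp [Matrix.single, Matrix.one_apply, h1, h2]
      · have h1' : ¬ (p = α a) := fun h' => h1 h'.symm
        simp [Matrix.single, Matrix.one_apply, h1, h1']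
    rw [hy₁eq, ← hadj]
    ring
  -- conclusion
  have hR : (∑ α ∈ Finset.univ.filter (fun α : Fin k → Fin m => StrictMono α),
      ∑ β ∈ Finset.univ.filter (fun β : Fin k → Fin n => StrictMono β),
        (A'.submatrix β α).det • adjSub A α β) q p
      = ∑ α ∈ Finset.univ.filter (fun α : Fin k → Fin m => StrictMono α),
          ∑ β ∈ Finset.univ.filter (fun β : Fin k → Fin n => StrictMono β),
            (A'.submatrix β α).det * ((adjSub A α β) q p) := by
    rw [Matrix.sum_apply]
    refine Finset.sum_congr rfl fun α _ => ?_
    rw [Matrix.sum_apply]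
    refine Finset.sum_congr rfl fun β _ => ?_
    rw [Matrix.smul_apply, smul_eq_mul]
  rw [hR, ← hW2, ← hW1]
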